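/- Let F_bulk be the cdf of a nondegenerate bivariate Gaussian distribution on ℝ² with density f_bulk, let u = (u₁, u₂) ∈ ℝ² with 0 < F_bulk(u) < 1, and let H be a bivariate generalized Pareto distribution with density h whose support lies in {w ∈ ℝ² : w₁ ≥ 0, w₂ ≤ 0} (first marginal lower endpoint 0, second marginal upper endpoint 0), with marginal cdfs H₁ and H₂. Let F be the bivariate cdf with density f(x) = f_bulk(x)·1{x ≤ u} + (1 − F_bulk(u))·h(x − u)·1{x ≰ u}, with marginal cdfs F₁ and F₂. Then: (i) for all x₁ ≥ u₁, F₁(x₁) = F_bulk(u₁, u₂) + (1 − F_bulk(u₁, u₂))·H₁(x₁ − u₁); and (ii) for all x₂ ≤ u₂, F₂(x₂) = F_bulk(u₁, x₂) + (1 − F_bulk(u₁, u₂))·H₂(x₂ − u₂). -/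

import Mathlib

open Filter Topology

/-- A (loose) notion of a `d`-variate cumulative distribution function:
monotone w.r.t. the componentwise order, with values in `[0,1]`,
tending to `1` at `+∞` and to `0` at `-∞`. -/
def IsCDFd {d : ℕ} (F : (Fin d → ℝ) → ℝ) : Prop :=
  Monotone F ∧ (∀ x, 0 ≤ F x ∧ F x ≤ 1) ∧
    Tendsto F atTop (𝓝 1) ∧ Tendsto F atBot (𝓝 0)

/-- A univariate distribution function is nondegenerate if it is not the cdf of
a point mass, i.e. it takes some value strictly between 0 and 1. -/
def Nondeg1 (G : ℝ → ℝ) : Prop := ∃ t, 0 < G t ∧ G t < 1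

/-- `Fi` is the `i`-th univariate margin of the `d`-variate cdf `F`:
`Fi t` is the limit of `F` as all coordinates other than `i` tend to `+∞`. -/
def IsMarginD {d : ℕ} (F : (Fin d → ℝ) → ℝ) (i : Fin d) (Fi : ℝ → ℝ) : Prop :=
  ∀ t : ℝ, Tendsto (fun M : ℝ => F (fun j => if j = i then t else M)) atTop (𝓝 (Fi t))

/-- `G` is max-stable (an mGEVD): it has nondegenerate univariate margins and for
every `n ≥ 1` there are `αₙ ∈ (0,∞)^d`, `βₙ ∈ ℝ^d` with `G(αₙ x + βₙ)^n = G(x)`. -/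
def MaxStableD {d : ℕ} (G : (Fin d → ℝ) → ℝ) : Prop :=
  (∀ i, ∃ Gi, IsMarginD G i Gi ∧ Nondeg1 Gi) ∧
  ∀ n : ℕ, 1 ≤ n → ∃ α β : Fin d → ℝ, (∀ i, 0 < α i) ∧
    ∀ x, (G (fun i => α i * x i + β i)) ^ n = G x

/-- `F` is in the max-domain of attraction of `G`: there are sequences
`aₙ ∈ (0,∞)^d`, `bₙ ∈ ℝ^d` with `F(aₙ x + bₙ)^n → G(x)` at every continuity point of `G`. -/
def MDAd {d : ℕ} (F G : (Fin d → ℝ) → ℝ) : Prop :=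
  ∃ a b : ℕ → Fin d → ℝ, (∀ n i, 0 < a n i) ∧
    ∀ x, ContinuousAt G x →
      Tendsto (fun n => (F (fun i => a n i * x i + b n i)) ^ n) atTop (𝓝 (G x))

open MeasureTheory Matrix

lemma split_F (u p : Fin 2 → ℝ) (fbulk h f : (Fin 2 → ℝ) → ℝ) (c : ℝ)
    (hf₁ : ∀ x, x ≤ u → f x = fbulk x)
    (hf₂ : ∀ x, ¬ x ≤ u → f x = c * h (x - u))
    (hIntFb : IntegrableOn fbulk (Set.Iic u))
    (hIntE : IntegrableOn h (Set.Iic (p - u) \ Set.Iic 0)) :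
    ∫ y in Set.Iic p, f y =
      (∫ y in Set.Iic (p ⊓ u), fbulk y) +
        c * ∫ y in Set.Iic (p - u) \ Set.Iic 0, h y := by
  set E : Set (Fin 2 → ℝ) := Set.Iic (p - u) \ Set.Iic 0 with hE
  have hEmeas : MeasurableSet E := measurableSet_Iic.diff measurableSet_Iic
  have hmem : ∀ x : Fin 2 → ℝ, x - u ∈ E ↔ (x ≤ p ∧ ¬ x ≤ u) := by
    intro x
    simp only [hE, Set.mem_diff, Set.mem_Iic, sub_le_sub_iff_right, sub_nonpos]
  have key : ∀ x, (Set.Iic p).indicator f x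
      = (Set.Iic (p ⊓ u)).indicator fbulk x
        + (E.indicator (fun y => c * h y)) (x - u) := by
    intro x
    by_cases hxp : x ≤ p
    · by_cases hxu : x ≤ u
      · rw [Set.indicator_of_mem (Set.mem_Iic.mpr hxp),
          Set.indicator_of_mem (Set.mem_Iic.mpr (le_inf hxp hxu)),
          Set.indicator_of_notMem (fun hx => ((hmem x).mp hx).2 hxu),
          hf₁ x hxu, add_zero]
      · rw [Set.indicator_of_mem (Set.mem_Iic.mpr hxp),
          Set.indicator_of_notMem (fun hx => hxu (le_trans (Set.mem_Iic.mp hx) inf_le_right)),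
          Set.indicator_of_mem ((hmem x).mpr ⟨hxp, hxu⟩), hf₂ x hxu, zero_add]
    · rw [Set.indicator_of_notMem (fun hx => hxp (Set.mem_Iic.mp hx)),
        Set.indicator_of_notMem (fun hx => hxp (le_trans (Set.mem_Iic.mp hx) inf_le_left)),
        Set.indicator_of_notMem (fun hx => hxp ((hmem x).mp hx).1), add_zero]
  have hB : Integrable ((Set.Iic (p ⊓ u)).indicator fbulk) :=
    (integrable_indicator_iff measurableSet_Iic).mpr
      (hIntFb.mono_set (Set.Iic_subset_Iic.mpr inf_le_right))
  have hT0 : Integrable (E.indicator (fun y => c * h y)) :=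
    (integrable_indicator_iff hEmeas).mpr (hIntE.const_mul c)
  have hT : Integrable (fun x : Fin 2 → ℝ => (E.indicator (fun y => c * h y)) (x - u)) := by
    exact ((measurePreserving_sub_right (volume : Measure (Fin 2 → ℝ)) u).integrable_comp_emb
      (MeasurableEquiv.subRight u).measurableEmbedding).mpr hT0
  calc ∫ y in Set.Iic p, f y = ∫ x, (Set.Iic p).indicator f x :=
        (integral_indicator measurableSet_Iic).symm
    _ = ∫ x, ((Set.Iic (p ⊓ u)).indicator fbulk x
          + (E.indicator (fun y => c * h y)) (x - u)) := by
        exact congrArg _ (funext key)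
    _ = (∫ x, (Set.Iic (p ⊓ u)).indicator fbulk x)
          + ∫ x, (E.indicator (fun y => c * h y)) (x - u) := integral_add hB hT
    _ = (∫ y in Set.Iic (p ⊓ u), fbulk y) + ∫ y, (E.indicator (fun y => c * h y)) y := by
        rw [integral_indicator measurableSet_Iic,
          integral_sub_right_eq_self (E.indicator (fun y => c * h y)) u]
    _ = (∫ y in Set.Iic (p ⊓ u), fbulk y) + c * ∫ y in E, h y := by
        rw [integral_indicator hEmeas, integral_const_mul c (h ·)]


/-- For the bivariate extreme mixture with nondegenerate Gaussian
bulk (density `fbulk`, cdf `Fbulk`, with `0 < Fbulk u < 1`) and a bivariate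
generalized Pareto tail `H` (associated with a max-stable `G`, density `h`) supported
in `{w | w 0 ≥ 0 ∧ w 1 ≤ 0}`, with marginal cdfs `H₁`, `H₂`, the margins `F₁`, `F₂`
of the mixture cdf `F` satisfy:
(i) `F₁ x₁ = Fbulk (u₁,u₂) + (1 - Fbulk (u₁,u₂)) H₁ (x₁ - u₁)` for `x₁ ≥ u₁`, and
(ii) `F₂ x₂ = Fbulk (u₁,x₂) + (1 - Fbulk (u₁,u₂)) H₂ (x₂ - u₂)` for `x₂ ≤ u₂`. -/
theorem mixture_margins
    (μv : Fin 2 → ℝ) (S : Matrix (Fin 2) (Fin 2) ℝ) (hS : S.PosDef)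
    (fbulk Fbulk : (Fin 2 → ℝ) → ℝ)
    (hfb : ∀ x, fbulk x = (2 * Real.pi)⁻¹ * (Real.sqrt S.det)⁻¹ *
      Real.exp (-(1 / 2) * ((x - μv) ⬝ᵥ (S⁻¹ *ᵥ (x - μv)))))
    (hFb : ∀ x, Fbulk x = ∫ y in Set.Iic x, fbulk y)
    (u : Fin 2 → ℝ) (h0 : 0 < Fbulk u) (h1 : Fbulk u < 1)
    (G H : (Fin 2 → ℝ) → ℝ)
    (hGcdf : IsCDFd G) (hGms : MaxStableD G) (hG0 : 0 < G 0) (hG1 : G 0 < 1)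
    (hH : ∀ x, H x = Real.log (G (x ⊓ 0) / G x) / Real.log (G 0))
    (h : (Fin 2 → ℝ) → ℝ)
    (hhd : ∀ x, H x = ∫ w in Set.Iic x, h w)
    (hsupp : ∀ w, h w ≠ 0 → 0 ≤ w 0 ∧ w 1 ≤ 0)
    (H₁ H₂ : ℝ → ℝ) (hH₁ : IsMarginD H 0 H₁) (hH₂ : IsMarginD H 1 H₂)
    (f F : (Fin 2 → ℝ) → ℝ)
    (hf₁ : ∀ x, x ≤ u → f x = fbulk x)
    (hf₂ : ∀ x, ¬ x ≤ u → f x = (1 - Fbulk u) * h (x - u))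
    (hF : ∀ x, F x = ∫ y in Set.Iic x, f y)
    (F₁ F₂ : ℝ → ℝ) (hF₁ : IsMarginD F 0 F₁) (hF₂ : IsMarginD F 1 F₂) :
    (∀ x₁ : ℝ, u 0 ≤ x₁ →
        F₁ x₁ = Fbulk u + (1 - Fbulk u) * H₁ (x₁ - u 0)) ∧
      (∀ x₂ : ℝ, x₂ ≤ u 1 →
        F₂ x₂ = Fbulk ![u 0, x₂] + (1 - Fbulk u) * H₂ (x₂ - u 1)) := by
  have hIntFb : IntegrableOn fbulk (Set.Iic u) := by
    by_contra hc
    rw [hFb u, integral_undef hc] at h0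
    exact lt_irrefl 0 h0
  have hbigN : ∀ r : ℝ, ∃ N : ℝ, r ≤ N ∧ 0 ≤ N ∧
      IntegrableOn h (Set.Iic (fun _ : Fin 2 => N)) := by
    intro r
    have hGt : Tendsto G atTop (𝓝 1) := hGcdf.2.2.1
    have hev : ∀ᶠ x : (Fin 2 → ℝ) in atTop, G 0 < G x :=
      hGt.eventually (eventually_gt_nhds hG1)
    obtain ⟨x₀, hx₀⟩ := eventually_atTop.mp hev
    set N : ℝ := max (max (x₀ 0) (x₀ 1)) (max r 0) with hNdef
    have hN0 : (0:ℝ) ≤ N := le_trans (le_max_right r 0) (le_max_right _ _)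
    have hxle : x₀ ≤ (fun _ : Fin 2 => N) := by
      intro i
      fin_cases i
      · exact le_trans (le_max_left _ _) (le_max_left _ _)
      · exact le_trans (le_max_right _ _) (le_max_left _ _)
    have hGN : G 0 < G (fun _ => N) := hx₀ _ hxle
    have hinf : (fun _ : Fin 2 => N) ⊓ 0 = 0 := by
      funext i
      simp only [Pi.inf_apply, Pi.zero_apply]
      exact min_eq_right hN0
    have hHN : H (fun _ : Fin 2 => N) ≠ 0 := by
      rw [hH, hinf]
      have hGNpos : 0 < G (fun _ => N) := lt_trans hG0 hGN
      have hnum : Real.log (G 0 / G (fun _ => N)) < 0 :=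
        Real.log_neg (div_pos hG0 hGNpos) ((div_lt_one hGNpos).mpr hGN)
      exact div_ne_zero hnum.ne (Real.log_neg hG0 hG1).ne
    have hint : IntegrableOn h (Set.Iic (fun _ : Fin 2 => N)) := by
      by_contra hc
      rw [hhd, integral_undef hc] at hHN
      exact hHN rfl
    exact ⟨N, le_trans (le_max_left r 0) (le_max_right _ _), hN0, hint⟩
  have hae0 : ∀ᵐ y : Fin 2 → ℝ, y 0 ≠ 0 := by
    rw [ae_iff]
    have hset : {y : Fin 2 → ℝ | ¬ y 0 ≠ 0} =
        Set.pi Set.univ (fun i => if i = 0 then ({0} : Set ℝ) else Set.univ) := by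
      ext y; simp [Fin.forall_fin_two]
    rw [hset, volume_pi_pi]
    simp [Fin.prod_univ_two]
  constructor
  · -- part (i)
    intro x₁ hx₁
    set a : ℝ := x₁ - u 0 with hadef
    have ha : 0 ≤ a := sub_nonneg.mpr hx₁
    have hHa : H₁ a = H (fun j => if j = 0 then a else 0) := by
      have hconst : ∀ M : ℝ, 0 ≤ M →
          H (fun j => if j = 0 then a else M) = H (fun j => if j = 0 then a else 0) := by
        intro M hM
        rw [hhd, hhd, ← integral_indicator measurableSet_Iic,
          ← integral_indicator measurableSet_Iic]
        congr 1
        funext y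
        by_cases hy : h y = 0
        · classical simp [Set.indicator_apply, hy]
        · obtain ⟨hy0, hy1⟩ := hsupp y hy
          have hiff : (y ∈ Set.Iic fun j => if j = 0 then a else M) ↔
              (y ∈ Set.Iic fun j => if j = 0 then a else 0) := by
            simp only [Set.mem_Iic, Pi.le_def]
            constructor
            · intro hj j
              fin_cases j
              · simpa using hj 0
              · simpa using hy1
            · intro hj j
              fin_cases j
              · simpa using hj 0
              · simpa using le_trans hy1 hM
          classical simp only [Set.indicator_apply, hiff]
      refine tendsto_nhds_unique (hH₁ a) ?_
      refine Tendsto.congr' ?_ tendsto_const_nhds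
      filter_upwards [eventually_ge_atTop (0:ℝ)] with M hM
      exact (hconst M hM).symm
    have hmain : ∀ M : ℝ, u 1 ≤ M →
        F (fun j => if j = 0 then x₁ else M)
          = Fbulk u + (1 - Fbulk u) * H (fun j => if j = 0 then a else 0) := by
      intro M hM
      set p : Fin 2 → ℝ := fun j => if j = 0 then x₁ else M with hpdef
      obtain ⟨N, hN1, hN0, hNint⟩ := hbigN (max a (M - u 1))
      have hsub : Set.Iic (p - u) \ Set.Iic 0 ⊆ Set.Iic (fun _ : Fin 2 => N) := by
        rintro y ⟨hy1, -⟩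
        intro j
        fin_cases j
        · calc y 0 ≤ p 0 - u 0 := hy1 0
            _ = a := by simp [hpdef, hadef]
            _ ≤ N := le_trans (le_max_left _ _) hN1
        · calc y 1 ≤ p 1 - u 1 := hy1 1
            _ = M - u 1 := by simp [hpdef]
            _ ≤ N := le_trans (le_max_right _ _) hN1
      have hIntE := hNint.mono_set hsub
      have hsplit := split_F u p fbulk h f (1 - Fbulk u) hf₁ hf₂ hIntFb hIntE
      have hpu : p ⊓ u = u := by
        funext j
        fin_cases j
        · simpa [hpdef, Pi.inf_apply] using min_eq_right hx₁
        · simpa [hpdef, Pi.inf_apply] using min_eq_right hM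
      have hEeq : ∫ y in Set.Iic (p - u) \ Set.Iic 0, h y
          = ∫ y in Set.Iic (fun j => if j = 0 then a else (0:ℝ)), h y := by
        rw [← integral_indicator (measurableSet_Iic.diff measurableSet_Iic),
          ← integral_indicator measurableSet_Iic]
        refine integral_congr_ae ?_
        filter_upwards [hae0] with y hyne
        by_cases hy : h y = 0
        · classical simp [Set.indicator_apply, hy]
        · obtain ⟨hy0, hy1⟩ := hsupp y hy
          have hypos : 0 < y 0 := lt_of_le_of_ne hy0 (Ne.symm hyne)
          have hiff : (y ∈ Set.Iic (p - u) \ Set.Iic 0) ↔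
              (y ∈ Set.Iic fun j => if j = 0 then a else (0:ℝ)) := by
            simp only [Set.mem_diff, Set.mem_Iic, Pi.le_def, Pi.sub_apply, Pi.zero_apply]
            constructor
            · rintro ⟨hj, -⟩
              intro j
              fin_cases j
              · simpa [hpdef, hadef] using hj 0
              · simpa using hy1
            · intro hj
              refine ⟨fun j => ?_, fun hc => absurd (hc 0) (not_le.mpr hypos)⟩
              fin_cases j
              · simpa [hpdef, hadef] using hj 0
              · show y 1 ≤ p 1 - u 1
                have h1 : p 1 = M := by simp [hpdef]
                have h2 : y 1 ≤ 0 := hy1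
                rw [h1]; linarith
          classical simp only [Set.indicator_apply, hiff]
      rw [hF p, hsplit, hpu, hEeq, ← hFb u, ← hhd]
    have hlim : Tendsto (fun M : ℝ => F (fun j => if j = 0 then x₁ else M)) atTop
        (𝓝 (Fbulk u + (1 - Fbulk u) * H (fun j => if j = 0 then a else 0))) := by
      refine Tendsto.congr' ?_ tendsto_const_nhds
      filter_upwards [eventually_ge_atTop (u 1)] with M hM
      exact (hmain M hM).symm
    rw [tendsto_nhds_unique (hF₁ x₁) hlim, hHa]
  · -- part (ii)
    intro x₂ hx₂
    set b : ℝ := x₂ - u 1 with hbdef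
    have hb : b ≤ 0 := sub_nonpos.mpr hx₂
    have hmain : ∀ M : ℝ, u 0 ≤ M →
        F (fun j => if j = 1 then x₂ else M)
          = Fbulk ![u 0, x₂] + (1 - Fbulk u) * H (fun j => if j = 1 then b else M - u 0) := by
      intro M hM
      set p : Fin 2 → ℝ := fun j => if j = 1 then x₂ else M with hpdef
      obtain ⟨N, hN1, hN0, hNint⟩ := hbigN (M - u 0)
      have hsub : Set.Iic (p - u) \ Set.Iic 0 ⊆ Set.Iic (fun _ : Fin 2 => N) := by
        rintro y ⟨hy1, -⟩
        intro j
        fin_cases j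
        · calc y 0 ≤ p 0 - u 0 := hy1 0
            _ = M - u 0 := by simp [hpdef]
            _ ≤ N := hN1
        · calc y 1 ≤ p 1 - u 1 := hy1 1
            _ = b := by simp [hpdef, hbdef]
            _ ≤ N := le_trans hb hN0
      have hIntE := hNint.mono_set hsub
      have hsplit := split_F u p fbulk h f (1 - Fbulk u) hf₁ hf₂ hIntFb hIntE
      have hpu : p ⊓ u = ![u 0, x₂] := by
        funext j
        fin_cases j
        · simpa [hpdef, Pi.inf_apply] using min_eq_right hM
        · simpa [hpdef, Pi.inf_apply] using min_eq_left hx₂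
      have hEeq : ∫ y in Set.Iic (p - u) \ Set.Iic 0, h y
          = ∫ y in Set.Iic (p - u), h y := by
        rw [← integral_indicator (measurableSet_Iic.diff measurableSet_Iic),
          ← integral_indicator measurableSet_Iic]
        refine integral_congr_ae ?_
        filter_upwards [hae0] with y hyne
        by_cases hy : h y = 0
        · classical simp [Set.indicator_apply, hy]
        · obtain ⟨hy0, hy1⟩ := hsupp y hy
          have hypos : 0 < y 0 := lt_of_le_of_ne hy0 (Ne.symm hyne)
          have hiff : (y ∈ Set.Iic (p - u) \ Set.Iic 0) ↔ (y ∈ Set.Iic (p - u)) := by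
            simp only [Set.mem_diff, Set.mem_Iic, Pi.le_def, Pi.zero_apply]
            exact ⟨fun hj => hj.1, fun hj => ⟨hj, fun hc => absurd (hc 0) (not_le.mpr hypos)⟩⟩
          classical simp only [Set.indicator_apply, hiff]
      have hvec : p - u = fun j => if j = 1 then b else M - u 0 := by
        funext j
        fin_cases j
        · simp [hpdef]
        · simp [hpdef, hbdef]
      rw [hF p, hsplit, hpu, hEeq, hvec, ← hFb, ← hhd]
    have h1 : Tendsto (fun M : ℝ => H (fun j => if j = 1 then b else M - u 0)) atTop
        (𝓝 (H₂ b)) := by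
      have hc := (hH₂ b).comp (tendsto_atTop_add_const_right atTop (-(u 0)) tendsto_id)
      simpa [Function.comp_def, sub_eq_add_neg] using hc
    have hlim : Tendsto (fun M : ℝ => F (fun j => if j = 1 then x₂ else M)) atTop
        (𝓝 (Fbulk ![u 0, x₂] + (1 - Fbulk u) * H₂ b)) := by
      refine Tendsto.congr' ?_ (((h1.const_mul (1 - Fbulk u)).const_add (Fbulk ![u 0, x₂])))
      filter_upwards [eventually_ge_atTop (u 0)] with M hM
      exact (hmain M hM).symm
    rw [tendsto_nhds_unique (hF₂ x₂) hlim]
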